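/- Let M be a left S-semimodule, N a subtractive S-subsemimodule of M, and suppose M = L ⊕ K (internal direct sum) with L ≤ N and K ≤ M. Then N = L ⊕ (K ∩ N), i.e., N is the internal direct sum of L and K ∩ N. -/
import Mathlib


/-- `L` is a subtractive subsemimodule of `M`. -/
def Subtractive {S : Type*} [Semiring S] {M : Type*} [AddCommMonoid M] [Module S M]
    (L : Submodule S M) : Prop :=
  ∀ m : M, ∀ l ∈ L, ∀ l' ∈ L, m + l = l' → m ∈ L

/-- If `N ≤ M` is subtractive and `M = L ⊕ K` with `L ≤ N`, then
`N = L ⊕ (K ∩ N)` (internal direct sum: every `n ∈ N` is uniquely `ℓ + k` with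
`ℓ ∈ L` and `k ∈ K ⊓ N`). -/
theorem stmt_2 (S : Type*) [Semiring S] (M : Type*) [AddCommMonoid M] [Module S M]
    (N L K : Submodule S M) (hN : Subtractive N) (hLN : L ≤ N)
    (hds : ∀ m : M, ∃! p : L × K, m = (p.1 : M) + (p.2 : M)) :
    ∀ n ∈ N, ∃! p : L × (K ⊓ N : Submodule S M), n = (p.1 : M) + (p.2 : M) := by
  intro n hn
  obtain ⟨⟨l, k⟩, hp, huniq⟩ := hds n
  have hkN : (k : M) ∈ N := by
    apply hN (k : M) (l : M) (hLN l.2) n hn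
    rw [add_comm]; exact hp.symm
  refine ⟨⟨l, ⟨k, k.2, hkN⟩⟩, hp, ?_⟩
  rintro ⟨l', k'⟩ h
  have := huniq ⟨l', ⟨(k' : M), k'.2.1⟩⟩ h
  have h1 : l' = l := congrArg Prod.fst this
  have h2 : ((k' : M) : M) = (k : M) := congrArg (fun p => ((p.2 : K) : M)) this
  ext
  · exact congrArg Subtype.val h1
  · exact h2
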